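/- arXiv:1910.06676 — 2 statements merged into one kernel-verified Lean document; each statement's English description precedes it below -/
import Mathlib

section
/- Let R > 0, let f : ℝ³ → ℝ be twice continuously differentiable and g : ℝ³ → ℝ be continuously differentiable, both supported in the closed ball B_R(0). Define A(τ,x) := ∂_τ(τ·M_f(τ,x)) + τ·M_g(τ,x) for τ > 0. Then there is a constant C > 0 such that for all t ≥ 1 and all x ∈ ℝ³, |A((3t)^{1/3}, x)| ≤ C·t^{−1/3}; that is, in the original FRW time variable t = τ³/3 the solution decays at the rate O(t^{−1/3}). -/
open MeasureTheory Metric Real Filter Topology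
/-- The spherical mean `M_f(r,x) = (1/(4π r²)) ∫_{S_r(x)} f dS` (surface measure = 2-dimensional
Hausdorff measure), extended by `M_f(0,x) := f(x)`. -/
noncomputable def sphericalMean (f : EuclideanSpace ℝ (Fin 3) → ℝ) (r : ℝ)
    (x : EuclideanSpace ℝ (Fin 3)) : ℝ :=
  if r = 0 then f x
  else (1 / (4 * π * r ^ 2)) * ∫ y in sphere x r, f y ∂(μH[2])

open scoped ENNReal NNReal Pointwise

namespace KirchhoffAux

/-! ### Surface (Hausdorff) measure estimates for spheres in `ℝ³` -/

noncomputable def m2 : ℝ≥0∞ := μH[2] (closedBall (0 : EuclideanSpace ℝ (Fin 2)) 1)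

lemma m2_ne_top : m2 ≠ ⊤ := by
  have h : (μH[2] : Measure (EuclideanSpace ℝ (Fin 2))) =
      μH[(Module.finrank ℝ (EuclideanSpace ℝ (Fin 2)) : ℝ)] := by
    norm_num [finrank_euclideanSpace_fin]
  rw [m2, h]
  exact ((isCompact_closedBall _ _).measure_lt_top).ne

noncomputable def proj (i : Fin 3) (y : EuclideanSpace ℝ (Fin 3)) : EuclideanSpace ℝ (Fin 2) :=
  WithLp.toLp 2 (fun j => y (i.succAbove j))

lemma norm_sq_split (i : Fin 3) (y : EuclideanSpace ℝ (Fin 3)) :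
    ‖y‖ ^ 2 = y i ^ 2 + ‖proj i y‖ ^ 2 := by
  have h3 : ‖y‖ ^ 2 = ∑ k, y k ^ 2 := by
    rw [EuclideanSpace.norm_eq, Real.sq_sqrt (by positivity)]
    simp [sq_abs]
  have h2 : ‖proj i y‖ ^ 2 = ∑ j, y (i.succAbove j) ^ 2 := by
    rw [EuclideanSpace.norm_eq, Real.sq_sqrt (by positivity)]
    simp [proj, sq_abs]
  rw [h3, h2, Fin.sum_univ_succAbove (fun k => y k ^ 2) i]

lemma dist_proj_le (i : Fin 3) (y z : EuclideanSpace ℝ (Fin 3)) :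
    dist (proj i y) (proj i z) ≤ dist y z := by
  rw [EuclideanSpace.dist_eq, EuclideanSpace.dist_eq]
  apply Real.sqrt_le_sqrt
  rw [Fin.sum_univ_succAbove (fun k => dist (y k) (z k) ^ 2) i]
  have : ∑ j, dist (proj i y j) (proj i z j) ^ 2
      = ∑ j, dist (y (i.succAbove j)) (z (i.succAbove j)) ^ 2 := rfl
  rw [this]
  exact le_add_of_nonneg_left (by positivity)

lemma closedBall_meas (p : EuclideanSpace ℝ (Fin 2)) (R' : ℝ) (hR' : 0 ≤ R') :
    μH[2] (closedBall p R') ≤ ENNReal.ofReal (R' ^ 2) * m2 := by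
  have htrans : closedBall p R' = p +ᵥ closedBall (0 : EuclideanSpace ℝ (Fin 2)) R' := by
    rw [Metric.vadd_closedBall]; simp
  rw [htrans, MeasureTheory.hausdorffMeasure_vadd _ (Or.inl (by norm_num))]
  rcases eq_or_lt_of_le hR' with h0 | h0
  · have : closedBall (0 : EuclideanSpace ℝ (Fin 2)) R' = {0} := by
      rw [← h0, closedBall_zero]
    rw [this]
    haveI : NullSingletonClass (μH[2] : Measure (EuclideanSpace ℝ (Fin 2))) :=
      MeasureTheory.Measure.noAtoms_hausdorff _ (by norm_num)
    simp
  · have hball : closedBall (0 : EuclideanSpace ℝ (Fin 2)) R'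
        = R' • closedBall (0 : EuclideanSpace ℝ (Fin 2)) 1 := by
      rw [_root_.smul_closedBall _ _ zero_le_one]
      simp [abs_of_pos h0, Real.norm_eq_abs]
    rw [hball, MeasureTheory.Measure.hausdorffMeasure_smul₀ (by norm_num) h0.ne' _]
    rw [ENNReal.smul_def, smul_eq_mul]
    apply mul_le_mul_left
    rw [show ((2:ℝ)) = ((2:ℕ):ℝ) by norm_num, NNReal.rpow_natCast]
    rw [ENNReal.coe_pow]
    have : (‖R'‖₊ : ℝ≥0∞) = ENNReal.ofReal R' := by
      exact Real.enorm_eq_ofReal hR'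
    rw [this, ← ENNReal.ofReal_pow hR']

lemma cap_piece (τ : ℝ) (hτ : 0 < τ) (c : EuclideanSpace ℝ (Fin 3)) (R' : ℝ)
    (i : Fin 3) (ε : ℝ) (hε : ε = 1 ∨ ε = -1) :
    μH[2] {y : EuclideanSpace ℝ (Fin 3) |
        (y ∈ sphere (0 : EuclideanSpace ℝ (Fin 3)) τ ∩ closedBall c R') ∧ τ / 2 ≤ ε * y i} ≤
      4 * μH[2] (closedBall (proj i c) R') := by
  classical
  set cap := {y : EuclideanSpace ℝ (Fin 3) |
      (y ∈ sphere (0 : EuclideanSpace ℝ (Fin 3)) τ ∩ closedBall c R') ∧ τ / 2 ≤ ε * y i} with hcap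
  have hε2 : ε ^ 2 = 1 := by rcases hε with h | h <;> rw [h] <;> norm_num
  have hεabs : |ε| = 1 := by rcases hε with h | h <;> rw [h] <;> norm_num
  set h : EuclideanSpace ℝ (Fin 2) → ℝ := fun u => Real.sqrt (τ ^ 2 - ‖u‖ ^ 2) with hh
  set G : EuclideanSpace ℝ (Fin 2) → EuclideanSpace ℝ (Fin 3) :=
    fun u => WithLp.toLp 2 (i.insertNth (ε * h u) (fun j => u j) : ∀ _ : Fin 3, ℝ) with hG
  set D : Set (EuclideanSpace ℝ (Fin 2)) := {u | ‖u‖ ^ 2 ≤ 3 / 4 * τ ^ 2} with hD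
  have hD_facts : ∀ u ∈ D, τ / 2 ≤ h u ∧ h u ^ 2 = τ ^ 2 - ‖u‖ ^ 2 ∧ ‖u‖ ≤ Real.sqrt 3 / 2 * τ := by
    intro u hu
    have h1 : τ ^ 2 / 4 ≤ τ ^ 2 - ‖u‖ ^ 2 := by
      have := hu; simp only [hD, Set.mem_setOf_eq] at this; nlinarith
    refine ⟨?_, Real.sq_sqrt (by nlinarith), ?_⟩
    · have : τ / 2 = Real.sqrt ((τ / 2) ^ 2) := (Real.sqrt_sq (by positivity)).symm
      rw [this]
      apply Real.sqrt_le_sqrt; nlinarith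
    · have h3 : ‖u‖ ^ 2 ≤ (Real.sqrt 3 / 2 * τ) ^ 2 := by
        have : (Real.sqrt 3) ^ 2 = 3 := Real.sq_sqrt (by norm_num)
        have := hu; simp only [hD, Set.mem_setOf_eq] at this; nlinarith
      calc ‖u‖ = Real.sqrt (‖u‖ ^ 2) := (Real.sqrt_sq (norm_nonneg u)).symm
        _ ≤ Real.sqrt ((Real.sqrt 3 / 2 * τ) ^ 2) := Real.sqrt_le_sqrt h3
        _ = Real.sqrt 3 / 2 * τ := Real.sqrt_sq (by positivity)
  have hlip_h : ∀ u ∈ D, ∀ v ∈ D, |h u - h v| ≤ Real.sqrt 3 * dist u v := by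
    intro u hu v hv
    obtain ⟨hu1, hu2, hu3⟩ := hD_facts u hu
    obtain ⟨hv1, hv2, hv3⟩ := hD_facts v hv
    have hsum : τ ≤ h u + h v := by linarith
    have hsq : |h u - h v| * (h u + h v) = |‖v‖ ^ 2 - ‖u‖ ^ 2| := by
      rw [← abs_of_nonneg (by linarith : (0:ℝ) ≤ h u + h v), ← abs_mul]
      congr 1
      ring_nf
      nlinarith [hu2, hv2]
    have hnorm : |‖v‖ ^ 2 - ‖u‖ ^ 2| ≤ Real.sqrt 3 * τ * dist u v := by
      have e1 : |‖v‖ ^ 2 - ‖u‖ ^ 2| = |‖v‖ - ‖u‖| * (‖v‖ + ‖u‖) := by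
        rw [← abs_of_nonneg (by positivity : (0:ℝ) ≤ ‖v‖ + ‖u‖), ← abs_mul]
        congr 1; ring
      have e2 : |‖v‖ - ‖u‖| ≤ dist u v := by
        rw [dist_comm, dist_eq_norm]; exact abs_norm_sub_norm_le v u
      have e3 : ‖v‖ + ‖u‖ ≤ Real.sqrt 3 * τ := by
        have : Real.sqrt 3 / 2 * τ + Real.sqrt 3 / 2 * τ = Real.sqrt 3 * τ := by ring
        linarith
      calc |‖v‖ ^ 2 - ‖u‖ ^ 2| = |‖v‖ - ‖u‖| * (‖v‖ + ‖u‖) := e1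
        _ ≤ dist u v * (Real.sqrt 3 * τ) := by
            apply mul_le_mul e2 e3 (by positivity) dist_nonneg
        _ = Real.sqrt 3 * τ * dist u v := by ring
    have habs : 0 ≤ |h u - h v| := abs_nonneg _
    nlinarith [hsq, hnorm, hsum, dist_nonneg (x := u) (y := v)]
  have hGi : ∀ w, G w i = ε * h w := fun w => by simp [hG]
  have hGs : ∀ w j, G w (i.succAbove j) = w j := fun w j => by simp [hG]
  have hlip : LipschitzOnWith 2 G D := by
    apply LipschitzOnWith.of_dist_le_mul
    intro u hu v hv
    have key : dist (G u) (G v) ^ 2 ≤ (2 * dist u v) ^ 2 := by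
      rw [EuclideanSpace.dist_eq, Real.sq_sqrt (by positivity)]
      rw [Fin.sum_univ_succAbove (fun k => dist (G u k) (G v k) ^ 2) i]
      have h1 : dist (G u i) (G v i) ^ 2 ≤ 3 * dist u v ^ 2 := by
        rw [hGi, hGi, Real.dist_eq]
        have e : |ε * h u - ε * h v| = |h u - h v| := by
          rw [show ε * h u - ε * h v = ε * (h u - h v) by ring, abs_mul, hεabs, one_mul]
        rw [e]
        have hl := hlip_h u hu v hv
        have h3 : Real.sqrt 3 ^ 2 = 3 := Real.sq_sqrt (by norm_num)
        nlinarith [abs_nonneg (h u - h v), dist_nonneg (x := u) (y := v), Real.sqrt_nonneg 3]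
      have h2 : ∑ j, dist (G u (i.succAbove j)) (G v (i.succAbove j)) ^ 2 = dist u v ^ 2 := by
        have e : dist u v ^ 2 = ∑ j, dist (u j) (v j) ^ 2 := by
          rw [EuclideanSpace.dist_eq, Real.sq_sqrt (by positivity)]
        rw [e]
        refine Finset.sum_congr rfl fun j _ => ?_
        rw [hGs, hGs]
      rw [h2]
      nlinarith [dist_nonneg (x := u) (y := v)]
    have hfin : dist (G u) (G v) ≤ 2 * dist u v := by
      nlinarith [dist_nonneg (x := G u) (y := G v), dist_nonneg (x := u) (y := v)]
    simpa using hfin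
  have hG_of_mem : ∀ y ∈ cap, G (proj i y) = y := by
    intro y hy
    obtain ⟨⟨hy1, hy2⟩, hy3⟩ := hy
    have hnorm : ‖y‖ = τ := by rwa [mem_sphere_zero_iff_norm] at hy1
    have hyi2 : ‖proj i y‖ ^ 2 = τ ^ 2 - y i ^ 2 := by
      have := norm_sq_split i y; rw [hnorm] at this; linarith
    have habs : h (proj i y) = |y i| := by
      rw [hh]
      simp only
      rw [hyi2, show τ ^ 2 - (τ ^ 2 - y i ^ 2) = y i ^ 2 by ring]
      exact Real.sqrt_sq_eq_abs _
    have hsign : ε * |y i| = y i := by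
      rcases hε with hε1 | hε1 <;> subst hε1
      · rw [one_mul] at hy3
        rw [abs_of_nonneg (by linarith), one_mul]
      · rw [neg_one_mul] at hy3
        rw [abs_of_nonpos (by linarith), neg_one_mul, neg_neg]
    refine PiLp.ext fun k => ?_
    refine Fin.succAboveCases i ?_ (fun j => ?_) k
    · rw [hGi, habs, hsign]
    · rw [hGs]; rfl
  have hsub1 : cap ⊆ G '' (proj i '' cap) := fun y hy =>
    ⟨proj i y, Set.mem_image_of_mem _ hy, hG_of_mem y hy⟩
  have hsub2 : proj i '' cap ⊆ D ∩ closedBall (proj i c) R' := by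
    rintro _ ⟨y, hy, rfl⟩
    obtain ⟨⟨hy1, hy2⟩, hy3⟩ := hy
    have hnorm : ‖y‖ = τ := by rwa [mem_sphere_zero_iff_norm] at hy1
    constructor
    · have h4 : τ ^ 2 / 4 ≤ y i ^ 2 := by nlinarith [hε2, hy3]
      have h5 := norm_sq_split i y
      rw [hnorm] at h5
      simp only [hD, Set.mem_setOf_eq]
      nlinarith
    · rw [mem_closedBall]
      exact le_trans (dist_proj_le i y c) (by rwa [mem_closedBall] at hy2)
  have step1 : μH[2] cap ≤ μH[2] (G '' (proj i '' cap)) := measure_mono hsub1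
  have step2 : μH[2] (G '' (proj i '' cap)) ≤ (2 : ℝ≥0) ^ (2 : ℝ) * μH[2] (proj i '' cap) :=
    (hlip.mono fun u hu => (hsub2 hu).1).hausdorffMeasure_image_le (by norm_num)
  have step3 : μH[2] (proj i '' cap) ≤ μH[2] (closedBall (proj i c) R') :=
    measure_mono fun u hu => (hsub2 hu).2
  have hcoe : ((2 : ℝ≥0) : ℝ≥0∞) ^ (2 : ℝ) = 4 := by
    rw [show ((2:ℝ)) = ((2:ℕ):ℝ) by norm_num, ENNReal.rpow_natCast]
    norm_num
  calc μH[2] cap ≤ (2 : ℝ≥0) ^ (2 : ℝ) * μH[2] (proj i '' cap) := le_trans step1 step2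
    _ ≤ (2 : ℝ≥0) ^ (2 : ℝ) * μH[2] (closedBall (proj i c) R') := by
        exact mul_le_mul_right step3 _
    _ = 4 * μH[2] (closedBall (proj i c) R') := by rw [hcoe]

/-- Cap bound, sphere centered at origin. -/
lemma cap_bound0 (τ : ℝ) (hτ : 0 < τ) (c : EuclideanSpace ℝ (Fin 3)) (R' : ℝ) (hR' : 0 ≤ R') :
    μH[2] (sphere (0 : EuclideanSpace ℝ (Fin 3)) τ ∩ closedBall c R') ≤
      24 * ENNReal.ofReal (R' ^ 2) * m2 := by
  classical
  set capS : Fin 3 × Bool → Set (EuclideanSpace ℝ (Fin 3)) := fun p =>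
    {y : EuclideanSpace ℝ (Fin 3) |
      (y ∈ sphere (0 : EuclideanSpace ℝ (Fin 3)) τ ∩ closedBall c R') ∧
        τ / 2 ≤ (if p.2 then (1:ℝ) else -1) * y p.1} with hcapS
  have hcover : sphere (0 : EuclideanSpace ℝ (Fin 3)) τ ∩ closedBall c R' ⊆
      ⋃ p : Fin 3 × Bool, capS p := by
    intro y hy
    have hnorm : ‖y‖ = τ := by
      rcases hy with ⟨hy1, _⟩; rwa [mem_sphere_zero_iff_norm] at hy1
    have hex : ∃ k : Fin 3, τ ^ 2 / 3 ≤ y k ^ 2 := by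
      by_contra hcon
      push_neg at hcon
      have hsumlt : ∑ k : Fin 3, y k ^ 2 < ∑ _k : Fin 3, τ ^ 2 / 3 :=
        Finset.sum_lt_sum_of_nonempty (by simp) fun k _ => hcon k
      have hns : ‖y‖ ^ 2 = ∑ k, y k ^ 2 := by
        rw [EuclideanSpace.norm_eq, Real.sq_sqrt (by positivity)]
        simp [sq_abs]
      rw [hnorm] at hns
      simp only [Finset.sum_const, Finset.card_univ, Fintype.card_fin, nsmul_eq_mul] at hsumlt
      nlinarith
    obtain ⟨k, hk⟩ := hex
    refine Set.mem_iUnion.2 ⟨⟨k, decide (0 ≤ y k)⟩, hy, ?_⟩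
    by_cases hyk : 0 ≤ y k
    · rw [if_pos (by simpa using hyk), one_mul]
      nlinarith
    · push_neg at hyk
      rw [if_neg (by simpa using hyk.not_ge), neg_one_mul]
      nlinarith
  calc μH[2] (sphere (0 : EuclideanSpace ℝ (Fin 3)) τ ∩ closedBall c R')
      ≤ ∑' p : Fin 3 × Bool, μH[2] (capS p) := le_trans (measure_mono hcover) (measure_iUnion_le _)
    _ = ∑ p : Fin 3 × Bool, μH[2] (capS p) := tsum_fintype _
    _ ≤ ∑ _p : Fin 3 × Bool, (4 * (ENNReal.ofReal (R' ^ 2) * m2)) := by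
        apply Finset.sum_le_sum
        intro p _
        refine le_trans (cap_piece τ hτ c R' p.1 _ ?_) ?_
        · by_cases hb : p.2 <;> simp [hb]
        · exact mul_le_mul_right (closedBall_meas _ _ hR') _
    _ = 24 * ENNReal.ofReal (R' ^ 2) * m2 := by
        rw [Finset.sum_const]
        simp only [Finset.card_univ]
        rw [Fintype.card_prod, Fintype.card_fin, Fintype.card_bool]
        rw [show (6 : ℕ) • (4 * (ENNReal.ofReal (R' ^ 2) * m2))
            = (6 : ℝ≥0∞) * (4 * (ENNReal.ofReal (R' ^ 2) * m2)) by
          rw [nsmul_eq_mul]; norm_num]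
        ring

/-- Cap bound, general center. -/
lemma cap_bound (x : EuclideanSpace ℝ (Fin 3)) (τ : ℝ) (hτ : 0 < τ)
    (c : EuclideanSpace ℝ (Fin 3)) (R' : ℝ) (hR' : 0 ≤ R') :
    μH[2] (sphere x τ ∩ closedBall c R') ≤ 24 * ENNReal.ofReal (R' ^ 2) * m2 := by
  have htrans : sphere x τ ∩ closedBall c R'
      = x +ᵥ (sphere (0 : EuclideanSpace ℝ (Fin 3)) τ ∩ closedBall (c - x) R') := by
    ext y
    simp only [Set.mem_inter_iff, Set.mem_vadd_set_iff_neg_vadd_mem, mem_sphere_iff_norm,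
      mem_closedBall, vadd_eq_add, neg_add_eq_sub, mem_sphere_zero_iff_norm, dist_eq_norm]
    constructor
    · rintro ⟨h1, h2⟩
      refine ⟨by simpa [sub_eq_add_neg] using h1, ?_⟩
      rw [show y - x - (c - x) = y - c by abel]; exact h2
    · rintro ⟨h1, h2⟩
      refine ⟨by simpa [sub_eq_add_neg] using h1, ?_⟩
      rw [show y - x - (c - x) = y - c by abel] at h2; exact h2
  rw [htrans, MeasureTheory.hausdorffMeasure_vadd _ (Or.inl (by norm_num))]
  exact cap_bound0 τ hτ (c - x) R' hR'

lemma sphere_meas_ne_top (x : EuclideanSpace ℝ (Fin 3)) (τ : ℝ) :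
    μH[2] (sphere x τ) ≠ ⊤ := by
  rcases lt_trichotomy τ 0 with hτ | hτ | hτ
  · have : sphere x τ = ∅ := by
      ext y; simp only [mem_sphere, Set.mem_empty_iff_false, iff_false]
      intro h; exact absurd (h ▸ dist_nonneg) (not_le.2 hτ)
    simp [this]
  · subst hτ
    haveI : NullSingletonClass (μH[2] : Measure (EuclideanSpace ℝ (Fin 3))) :=
      MeasureTheory.Measure.noAtoms_hausdorff _ (by norm_num)
    simp
  · have hsub : sphere x τ ⊆ sphere x τ ∩ closedBall 0 (‖x‖ + τ) := by
      intro y hy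
      refine ⟨hy, ?_⟩
      rw [mem_closedBall, dist_zero_right]
      have : dist y x = τ := hy
      calc ‖y‖ = ‖x + (y - x)‖ := by rw [add_sub_cancel]
        _ ≤ ‖x‖ + ‖y - x‖ := norm_add_le _ _
        _ = ‖x‖ + τ := by rw [← dist_eq_norm, this]
    have := le_trans (measure_mono hsub) (cap_bound x τ hτ 0 (‖x‖ + τ) (by positivity))
    intro htop
    rw [htop] at this
    have h24 : (24 : ℝ≥0∞) * ENNReal.ofReal ((‖x‖ + τ) ^ 2) * m2 ≠ ⊤ := by
      apply ENNReal.mul_ne_top (ENNReal.mul_ne_top (by norm_num) ENNReal.ofReal_ne_top) m2_ne_top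
    exact h24 (top_le_iff.mp this)

instance sphere_finite (x : EuclideanSpace ℝ (Fin 3)) (τ : ℝ) :
    IsFiniteMeasure ((μH[2] : Measure (EuclideanSpace ℝ (Fin 3))).restrict (sphere x τ)) := by
  constructor
  rw [Measure.restrict_apply_univ]
  exact (sphere_meas_ne_top x τ).lt_top

/-! ### Change of variables to the unit sphere -/

/-- The affine map `ω ↦ x + τ • ω` as a homeomorphism. -/
noncomputable def TT (x : EuclideanSpace ℝ (Fin 3)) (τ : ℝ) (hτ : τ ≠ 0) :
    EuclideanSpace ℝ (Fin 3) ≃ₜ EuclideanSpace ℝ (Fin 3) :=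
  (Homeomorph.smulOfNeZero τ hτ).trans (Homeomorph.addLeft x)

lemma TT_apply {x : EuclideanSpace ℝ (Fin 3)} {τ : ℝ} (hτ : τ ≠ 0)
    (ω : EuclideanSpace ℝ (Fin 3)) : TT x τ hτ ω = x + τ • ω := rfl

lemma map_TT {x : EuclideanSpace ℝ (Fin 3)} {τ : ℝ} (hτ : τ ≠ 0) :
    Measure.map (TT x τ hτ) (μH[2] : Measure (EuclideanSpace ℝ (Fin 3)))
      = ((‖τ‖₊ ^ 2 : ℝ≥0) : ℝ≥0∞)⁻¹ • μH[2] := by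
  refine Measure.ext fun A hA => ?_
  rw [Measure.map_apply (TT x τ hτ).measurable hA]
  have hpre : TT x τ hτ ⁻¹' A = τ⁻¹ • ((-x) +ᵥ A) := by
    ext ω
    simp only [Set.mem_preimage, TT_apply, Set.mem_smul_set_iff_inv_smul_mem₀ (inv_ne_zero hτ),
      inv_inv, Set.mem_vadd_set_iff_neg_vadd_mem, vadd_eq_add, neg_neg]
  rw [hpre, MeasureTheory.Measure.hausdorffMeasure_smul₀ (by norm_num) (inv_ne_zero hτ),
    MeasureTheory.hausdorffMeasure_vadd _ (Or.inl (by norm_num))]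
  rw [ENNReal.smul_def, smul_eq_mul, Measure.smul_apply, smul_eq_mul]
  congr 1
  rw [show ((2:ℝ)) = ((2:ℕ):ℝ) by norm_num, NNReal.rpow_natCast]
  simp [ENNReal.coe_pow, nnnorm_inv,
    ENNReal.coe_inv (show ‖τ‖₊ ≠ 0 by simpa using hτ), ENNReal.inv_pow]
  rw [ENNReal.coe_inv (show ‖τ‖₊ ^ 2 ≠ 0 by simpa using hτ), ENNReal.coe_pow, ENNReal.inv_pow]

lemma TT_preimage_sphere {x : EuclideanSpace ℝ (Fin 3)} {τ : ℝ} (hτ : 0 < τ) :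
    TT x τ hτ.ne' ⁻¹' (sphere x τ) = sphere (0 : EuclideanSpace ℝ (Fin 3)) 1 := by
  ext ω
  simp only [Set.mem_preimage, TT_apply, mem_sphere_iff_norm, mem_sphere_zero_iff_norm, sub_zero]
  rw [add_sub_cancel_left, norm_smul, Real.norm_eq_abs, abs_of_pos hτ]
  constructor
  · intro h
    exact mul_left_cancel₀ hτ.ne' (h.trans (mul_one τ).symm)
  · intro h; rw [h, mul_one]

/-- Change of variables for integrals over spheres. -/
lemma sphere_integral_rescale (x : EuclideanSpace ℝ (Fin 3)) {τ : ℝ} (hτ : 0 < τ)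
    (F : EuclideanSpace ℝ (Fin 3) → ℝ) :
    ∫ y in sphere x τ, F y ∂(μH[2]) =
      τ ^ 2 * ∫ ω in sphere (0 : EuclideanSpace ℝ (Fin 3)) 1, F (x + τ • ω) ∂(μH[2]) := by
  have hemb : MeasurableEmbedding (TT x τ hτ.ne') := (TT x τ hτ.ne').measurableEmbedding
  have h1 : ∫ ω in sphere (0 : EuclideanSpace ℝ (Fin 3)) 1, F (x + τ • ω) ∂(μH[2])
      = ∫ y in sphere x τ, F y ∂(Measure.map (TT x τ hτ.ne') μH[2]) := by
    rw [hemb.setIntegral_map]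
    rw [TT_preimage_sphere hτ]
    rfl
  rw [h1, map_TT, Measure.restrict_smul, integral_smul_measure]
  rw [ENNReal.toReal_inv, ENNReal.coe_toReal]
  have : ((‖τ‖₊ ^ 2 : ℝ≥0) : ℝ) = τ ^ 2 := by
    push_cast
    rw [Real.norm_eq_abs, sq_abs]
  rw [this]
  rw [smul_eq_mul, ← mul_assoc, mul_inv_cancel₀ (by positivity), one_mul]

/-! ### Integral bounds -/

/-- Main integral bound: a function bounded by `M` on the sphere and supported in `B_R(0)`
has sphere integral at most `M · 24·m2·R²`. -/
lemma sphere_setIntegral_bound (x : EuclideanSpace ℝ (Fin 3)) {τ : ℝ} (hτ : 0 < τ)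
    {R : ℝ} (hR : 0 ≤ R) (h : EuclideanSpace ℝ (Fin 3) → ℝ) (hc : Continuous h)
    {M : ℝ} (hMnn : 0 ≤ M) (hM : ∀ y ∈ sphere x τ, |h y| ≤ M)
    (hvan : ∀ y, y ∉ closedBall (0 : EuclideanSpace ℝ (Fin 3)) R → h y = 0) :
    |∫ y in sphere x τ, h y ∂(μH[2])| ≤ M * (24 * m2.toReal * R ^ 2) := by
  set s := sphere x τ ∩ closedBall (0 : EuclideanSpace ℝ (Fin 3)) R with hs
  have hmeas_s : μH[2] s ≤ 24 * ENNReal.ofReal (R ^ 2) * m2 := cap_bound x τ hτ 0 R hR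
  have hstep : ∫ y in sphere x τ, h y ∂(μH[2]) = ∫ y in s, h y ∂(μH[2]) := by
    apply setIntegral_eq_of_subset_of_ae_diff_eq_zero
      (isClosed_sphere.measurableSet.nullMeasurableSet) Set.inter_subset_left
    refine Eventually.of_forall fun y hy => hvan y fun hball => hy.2 ⟨hy.1, hball⟩
  rw [hstep]
  have hfin : μH[2] s < ∞ := by
    refine lt_of_le_of_lt (measure_mono Set.inter_subset_left) ?_
    exact (sphere_meas_ne_top x τ).lt_top
  have hbound := norm_setIntegral_le_of_norm_le_const (μ := μH[2]) (s := s) hfin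
    (C := M) (fun y hy => by rw [Real.norm_eq_abs]; exact hM y hy.1)
  rw [Real.norm_eq_abs] at hbound
  refine le_trans hbound ?_
  apply mul_le_mul_of_nonneg_left ?_ hMnn
  have htR : (μH[2] s).toReal ≤ (24 * ENNReal.ofReal (R ^ 2) * m2).toReal := by
    apply ENNReal.toReal_mono ?_ hmeas_s
    exact ENNReal.mul_ne_top (ENNReal.mul_ne_top (by norm_num) ENNReal.ofReal_ne_top) m2_ne_top
  refine le_trans htR (le_of_eq ?_)
  rw [ENNReal.toReal_mul, ENNReal.toReal_mul]
  rw [ENNReal.toReal_ofReal (by positivity)]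
  norm_num
  ring

/-! ### Differentiation under the integral sign -/

lemma hasDerivAt_phi {f : EuclideanSpace ℝ (Fin 3) → ℝ} (hf : ContDiff ℝ 2 f)
    {Mf L : ℝ} (hMf : ∀ y, |f y| ≤ Mf) (hL : ∀ y, ‖fderiv ℝ f y‖ ≤ L)
    (x : EuclideanSpace ℝ (Fin 3)) (τ : ℝ) :
    HasDerivAt (fun s => ∫ ω in sphere (0 : EuclideanSpace ℝ (Fin 3)) 1, f (x + s • ω) ∂(μH[2]))
      (∫ ω in sphere (0 : EuclideanSpace ℝ (Fin 3)) 1,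
        fderiv ℝ f (x + τ • ω) ω ∂(μH[2])) τ := by
  have hfd : Differentiable ℝ f := hf.differentiable (by norm_num)
  have hfc : Continuous f := hf.continuous
  have hfd_cont : Continuous (fderiv ℝ f) := hf.continuous_fderiv (by norm_num)
  have key := hasDerivAt_integral_of_dominated_loc_of_deriv_le
    (μ := (μH[2] : Measure (EuclideanSpace ℝ (Fin 3))).restrict (sphere 0 1))
    (F := fun s ω => f (x + s • ω))
    (F' := fun s ω => fderiv ℝ f (x + s • ω) ω)
    (x₀ := τ) (s := ball τ 1) (ball_mem_nhds τ one_pos)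
    (bound := fun _ => L) ?_ ?_ ?_ ?_ ?_ ?_
  · exact key.2
  · refine Eventually.of_forall fun s => ?_
    exact (hfc.comp (continuous_const.add (continuous_const_smul s))).aestronglyMeasurable
  · refine Integrable.mono' (integrable_const Mf)
      ((hfc.comp (continuous_const.add (continuous_const_smul τ))).aestronglyMeasurable) ?_
    exact Eventually.of_forall fun ω => by simpa [Real.norm_eq_abs] using hMf _
  · apply Continuous.aestronglyMeasurable
    exact (hfd_cont.comp (continuous_const.add (continuous_const_smul τ))).clm_apply continuous_id
  · refine Eventually.mono (ae_restrict_mem isClosed_sphere.measurableSet) fun ω hω => ?_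
    intro s _
    have h1 : ‖ω‖ = 1 := by rwa [mem_sphere_zero_iff_norm] at hω
    calc ‖fderiv ℝ f (x + s • ω) ω‖ ≤ ‖fderiv ℝ f (x + s • ω)‖ * ‖ω‖ :=
          (fderiv ℝ f (x + s • ω)).le_opNorm ω
      _ ≤ L := by rw [h1, mul_one]; exact hL _
  · exact integrable_const L
  · refine Eventually.of_forall fun ω => ?_
    intro s _
    have hline : HasDerivAt (fun s : ℝ => x + s • ω) ω s := by
      simpa using ((hasDerivAt_id s).smul_const ω).const_add x
    exact (hfd (x + s • ω)).hasFDerivAt.comp_hasDerivAt s hline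

end KirchhoffAux

/-- In the original FRW time variable `t = τ³/3` (i.e. `τ = (3t)^{1/3}`),
the Kirchhoff spherical-means solution `A(τ,x) = ∂_τ(τ·M_f(τ,x)) + τ·M_g(τ,x)` with data of
class `C² × C¹` supported in `B_R(0)` decays at the rate `O(t^{-1/3})`. -/
theorem kirchhoff_decay_frw_time
    (R : ℝ) (hR : 0 < R)
    (f g : EuclideanSpace ℝ (Fin 3) → ℝ)
    (hf : ContDiff ℝ 2 f) (hg : ContDiff ℝ 1 g)
    (hfsupp : tsupport f ⊆ closedBall (0 : EuclideanSpace ℝ (Fin 3)) R)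
    (hgsupp : tsupport g ⊆ closedBall (0 : EuclideanSpace ℝ (Fin 3)) R)
    (A : ℝ → EuclideanSpace ℝ (Fin 3) → ℝ)
    (hA : ∀ τ : ℝ, 0 < τ → ∀ x, A τ x =
      deriv (fun s => s * sphericalMean f s x) τ + τ * sphericalMean g τ x) :
    ∃ C > 0, ∀ t : ℝ, 1 ≤ t → ∀ x,
      |A ((3 * t) ^ ((1 : ℝ) / 3)) x| ≤ C * t ^ (-(1 : ℝ) / 3) := by
  classical
  open KirchhoffAux in
  -- boundedness of the data
  have hfc : Continuous f := hf.continuous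
  have hgc : Continuous g := hg.continuous
  have hcs_f : HasCompactSupport f :=
    IsCompact.of_isClosed_subset (isCompact_closedBall _ _) (isClosed_tsupport f) hfsupp
  have hcs_g : HasCompactSupport g :=
    IsCompact.of_isClosed_subset (isCompact_closedBall _ _) (isClosed_tsupport g) hgsupp
  obtain ⟨Mf, hMf⟩ := hcs_f.exists_bound_of_continuous hfc
  obtain ⟨Mg, hMg⟩ := hcs_g.exists_bound_of_continuous hgc
  have hfd_cont : Continuous (fderiv ℝ f) := hf.continuous_fderiv (by norm_num)
  obtain ⟨L, hL⟩ := (hcs_f.fderiv ℝ).exists_bound_of_continuous hfd_cont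
  have hMf0 : 0 ≤ Mf := le_trans (norm_nonneg _) (hMf 0)
  have hMg0 : 0 ≤ Mg := le_trans (norm_nonneg _) (hMg 0)
  have hL0 : 0 ≤ L := le_trans (norm_nonneg _) (hL 0)
  -- vanishing of the data outside B_R(0)
  have hf_van : ∀ y, y ∉ closedBall (0 : EuclideanSpace ℝ (Fin 3)) R → f y = 0 :=
    fun y hy => image_eq_zero_of_notMem_tsupport (fun h => hy (hfsupp h))
  have hg_van : ∀ y, y ∉ closedBall (0 : EuclideanSpace ℝ (Fin 3)) R → g y = 0 :=
    fun y hy => image_eq_zero_of_notMem_tsupport (fun h => hy (hgsupp h))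
  have hf'_van : ∀ y, y ∉ closedBall (0 : EuclideanSpace ℝ (Fin 3)) R → fderiv ℝ f y = 0 := by
    intro y hy
    by_contra hne
    exact hy (hfsupp (support_fderiv_subset ℝ (Function.mem_support.2 hne)))
  set K : ℝ := 24 * KirchhoffAux.m2.toReal * R ^ 2 with hK
  have hK0 : 0 ≤ K := by
    rw [hK]
    have : 0 ≤ KirchhoffAux.m2.toReal := ENNReal.toReal_nonneg
    positivity
  set C0 : ℝ := (Mf * K + L * K + Mg * K) / (4 * π) with hC0
  have hC00 : 0 ≤ C0 := by
    rw [hC0]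
    have := Real.pi_pos
    positivity
  -- the main decay bound in conformal time
  have main : ∀ τ : ℝ, 1 ≤ τ → ∀ x, |A τ x| ≤ C0 / τ := by
    intro τ hτ1 x
    have hτ0 : (0:ℝ) < τ := lt_of_lt_of_le zero_lt_one hτ1
    set φ : ℝ → ℝ :=
      fun s => ∫ ω in sphere (0 : EuclideanSpace ℝ (Fin 3)) 1, f (x + s • ω) ∂(μH[2]) with hφ
    set I' : ℝ := ∫ ω in sphere (0 : EuclideanSpace ℝ (Fin 3)) 1,
      fderiv ℝ f (x + τ • ω) ω ∂(μH[2]) with hI'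
    have hφder : HasDerivAt φ I' τ :=
      hasDerivAt_phi hf (fun y => by rw [← Real.norm_eq_abs]; exact hMf y) hL x τ
    -- rewrite the deriv term
    have hev : (fun s => s * sphericalMean f s x) =ᶠ[𝓝 τ]
        (fun s => 1 / (4 * π) * (s * φ s)) := by
      filter_upwards [eventually_gt_nhds hτ0] with s hs
      rw [sphericalMean, if_neg hs.ne', sphere_integral_rescale x hs f]
      have hπ := Real.pi_ne_zero
      field_simp
      ring
    have hψ : HasDerivAt (fun s => 1 / (4 * π) * (s * φ s))
        (1 / (4 * π) * (1 * φ τ + τ * I')) τ :=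
      ((hasDerivAt_id τ).mul hφder).const_mul (1 / (4 * π))
    have hderiv_eq : deriv (fun s => s * sphericalMean f s x) τ
        = 1 / (4 * π) * (φ τ + τ * I') := by
      rw [hev.deriv_eq, hψ.deriv]
      ring
    -- the value of A
    have hAx : A τ x = 1 / (4 * π) * (φ τ + τ * I')
        + τ * (1 / (4 * π * τ ^ 2) * ∫ y in sphere x τ, g y ∂(μH[2])) := by
      rw [hA τ hτ0 x, hderiv_eq, sphericalMean, if_neg hτ0.ne']
    -- bounds on the three integrals
    have e1 : |φ τ| * τ ^ 2 ≤ Mf * K := by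
      have hres := sphere_integral_rescale x hτ0 f
      have hb := sphere_setIntegral_bound x hτ0 hR.le f hfc hMf0
        (fun y _ => by rw [← Real.norm_eq_abs]; exact hMf y) hf_van
      rw [hres, abs_mul, abs_of_pos (by positivity : (0:ℝ) < τ ^ 2)] at hb
      calc |φ τ| * τ ^ 2 = τ ^ 2 * |φ τ| := by ring
        _ ≤ Mf * K := hb
    have e2 : |I'| * τ ^ 2 ≤ L * K := by
      set H : EuclideanSpace ℝ (Fin 3) → ℝ :=
        fun y => fderiv ℝ f y ((1 / τ) • (y - x)) with hH
      have hHc : Continuous H :=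
        hfd_cont.clm_apply ((continuous_id.sub continuous_const).const_smul (1 / τ))
      have hHbound : ∀ y ∈ sphere x τ, |H y| ≤ L := by
        intro y hy
        have hdist : dist y x = τ := hy
        have hnorm : ‖(1 / τ) • (y - x)‖ = 1 := by
          rw [norm_smul, Real.norm_eq_abs, abs_of_pos (by positivity : (0:ℝ) < 1 / τ),
            ← dist_eq_norm, hdist]
          field_simp
        rw [← Real.norm_eq_abs]
        calc ‖H y‖ ≤ ‖fderiv ℝ f y‖ * ‖(1 / τ) • (y - x)‖ := (fderiv ℝ f y).le_opNorm _
          _ = ‖fderiv ℝ f y‖ := by rw [hnorm, mul_one]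
          _ ≤ L := hL y
      have hHvan : ∀ y, y ∉ closedBall (0 : EuclideanSpace ℝ (Fin 3)) R → H y = 0 := by
        intro y hy
        rw [hH]
        simp only
        rw [hf'_van y hy]
        rfl
      have hb := sphere_setIntegral_bound x hτ0 hR.le H hHc hL0 hHbound hHvan
      have hres := sphere_integral_rescale x hτ0 H
      have hcong : ∫ ω in sphere (0 : EuclideanSpace ℝ (Fin 3)) 1, H (x + τ • ω) ∂(μH[2]) = I' := by
        refine integral_congr_ae (Eventually.of_forall fun ω => ?_)
        rw [hH]
        simp only
        rw [add_sub_cancel_left, smul_smul, one_div, inv_mul_cancel₀ hτ0.ne', one_smul]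
      rw [hres, hcong, abs_mul, abs_of_pos (by positivity : (0:ℝ) < τ ^ 2)] at hb
      calc |I'| * τ ^ 2 = τ ^ 2 * |I'| := by ring
        _ ≤ L * K := hb
    have e3 : |∫ y in sphere x τ, g y ∂(μH[2])| ≤ Mg * K :=
      sphere_setIntegral_bound x hτ0 hR.le g hgc hMg0
        (fun y _ => by rw [← Real.norm_eq_abs]; exact hMg y) hg_van
    -- combine
    have hπ := Real.pi_pos
    have hAmul : A τ x * (4 * π * τ) = τ * φ τ + τ ^ 2 * I'
        + ∫ y in sphere x τ, g y ∂(μH[2]) := by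
      rw [hAx]
      field_simp
    have habs : |A τ x| * (4 * π * τ) ≤ Mf * K + L * K + Mg * K := by
      have h0 : |A τ x| * (4 * π * τ) = |A τ x * (4 * π * τ)| := by
        rw [abs_mul, abs_of_pos (by positivity : (0:ℝ) < 4 * π * τ)]
      rw [h0, hAmul]
      refine le_trans (abs_add_three _ _ _) ?_
      have h1 : |τ * φ τ| ≤ Mf * K := by
        rw [abs_mul, abs_of_pos hτ0]
        nlinarith [mul_nonneg (mul_nonneg hτ0.le (sub_nonneg.2 hτ1)) (abs_nonneg (φ τ)), e1]
      have h2 : |τ ^ 2 * I'| ≤ L * K := by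
        rw [abs_mul, abs_of_pos (by positivity : (0:ℝ) < τ ^ 2)]
        nlinarith [e2]
      exact add_le_add (add_le_add h1 h2) e3
    rw [hC0, div_div]
    rw [le_div_iff₀ (by positivity : (0:ℝ) < 4 * π * τ)]
    calc |A τ x| * (4 * π * τ) ≤ Mf * K + L * K + Mg * K := habs
      _ = Mf * K + L * K + Mg * K := rfl
  -- convert to FRW time
  refine ⟨C0 + 1, by positivity, fun t ht x => ?_⟩
  have h3t : (1:ℝ) ≤ 3 * t := by linarith
  have h3t0 : (0:ℝ) < 3 * t := by linarith
  have ht0 : (0:ℝ) < t := by linarith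
  set τ : ℝ := (3 * t) ^ ((1:ℝ) / 3) with hτdef
  have hτ1 : 1 ≤ τ := by
    rw [hτdef]
    calc (1:ℝ) = 1 ^ ((1:ℝ)/3) := (Real.one_rpow _).symm
      _ ≤ (3 * t) ^ ((1:ℝ)/3) := Real.rpow_le_rpow (by norm_num) h3t (by norm_num)
  have hτ0 : 0 < τ := lt_of_lt_of_le zero_lt_one hτ1
  have hmain := main τ hτ1 x
  have hcmp : C0 / τ ≤ (C0 + 1) * t ^ (-(1:ℝ) / 3) := by
    have ht13 : 0 < t ^ ((1:ℝ)/3) := Real.rpow_pos_of_pos ht0 _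
    have hle : t ^ ((1:ℝ)/3) ≤ τ := by
      rw [hτdef]
      exact Real.rpow_le_rpow ht0.le (by linarith) (by norm_num)
    have hneg : t ^ (-(1:ℝ) / 3) = (t ^ ((1:ℝ)/3))⁻¹ := by
      rw [show -(1:ℝ)/3 = -((1:ℝ)/3) by ring, Real.rpow_neg ht0.le]
    have hinv : τ⁻¹ ≤ (t ^ ((1:ℝ)/3))⁻¹ := by
      apply inv_anti₀ ht13 hle
    calc C0 / τ = C0 * τ⁻¹ := by rw [div_eq_mul_inv]
      _ ≤ C0 * (t ^ ((1:ℝ)/3))⁻¹ := by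
          exact mul_le_mul_of_nonneg_left hinv hC00
      _ = C0 * t ^ (-(1:ℝ) / 3) := by rw [hneg]
      _ ≤ (C0 + 1) * t ^ (-(1:ℝ) / 3) := by
          have : (0:ℝ) < t ^ (-(1:ℝ) / 3) := by rw [hneg]; positivity
          nlinarith
  exact le_trans hmain hcmp
end

section
/- Let f : ℝ³ → ℝ be twice continuously differentiable and g : ℝ³ → ℝ continuously differentiable, both with compact support, let x ∈ ℝ³, and fix τ > 0. Define, for 0 ≤ τ₀ < τ, A(τ,x;τ₀) := ∂_τ((τ−τ₀)·M_f(τ−τ₀,x)) + (τ−τ₀)·M_g(τ−τ₀,x). Then the limit lim_{τ₀→0⁺} A(τ,x;τ₀) exists and equals ∂_τ(τ·M_f(τ,x)) + τ·M_g(τ,x); that is, the Kirchhoff spherical-means solution depends continuously on the initial time τ₀ down to the singular time τ₀ = 0. -/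
open MeasureTheory Metric Real Filter Topology
open scoped NNReal ENNReal Pointwise

private noncomputable def sphParam : (Fin 2 → ℝ) → EuclideanSpace ℝ (Fin 3) := fun p =>
  (EuclideanSpace.equiv (Fin 3) ℝ).symm
    ![Real.sin (p 0) * Real.cos (p 1), Real.sin (p 0) * Real.sin (p 1), Real.cos (p 0)]

private lemma sphParam_contDiff : ContDiff ℝ 1 sphParam := by
  unfold sphParam
  apply ContDiff.comp
  · exact (EuclideanSpace.equiv (Fin 3) ℝ).symm.contDiff
  · have h0 : ContDiff ℝ 1 fun p : Fin 2 → ℝ => Real.sin (p 0) :=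
      Real.contDiff_sin.of_le le_top |>.comp (contDiff_apply ℝ ℝ (0 : Fin 2))
    have h1 : ContDiff ℝ 1 fun p : Fin 2 → ℝ => Real.sin (p 1) :=
      Real.contDiff_sin.of_le le_top |>.comp (contDiff_apply ℝ ℝ (1 : Fin 2))
    have h0c : ContDiff ℝ 1 fun p : Fin 2 → ℝ => Real.cos (p 0) :=
      Real.contDiff_cos.of_le le_top |>.comp (contDiff_apply ℝ ℝ (0 : Fin 2))
    have h1c : ContDiff ℝ 1 fun p : Fin 2 → ℝ => Real.cos (p 1) :=
      Real.contDiff_cos.of_le le_top |>.comp (contDiff_apply ℝ ℝ (1 : Fin 2))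
    apply contDiff_pi.mpr
    intro i
    fin_cases i <;> simp <;> first | exact h0.mul h1c | exact h0.mul h1 | exact h0c

private lemma image_compact_hausdorff_lt_top (P : (Fin 2 → ℝ) → EuclideanSpace ℝ (Fin 3))
    (hP : ContDiff ℝ 1 P) (s : Set (Fin 2 → ℝ)) (hs : IsCompact s) :
    μH[(2:ℝ)] (P '' s) < ⊤ := by
  have h : ∀ x : Fin 2 → ℝ, ∃ (K : ℝ≥0) (r : ℝ), 0 < r ∧
      LipschitzOnWith K P (Metric.closedBall x r) := by
    intro x
    obtain ⟨K, t, ht, hl⟩ := hP.contDiffAt.exists_lipschitzOnWith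
    obtain ⟨r, hr, hsub⟩ := Metric.nhds_basis_closedBall.mem_iff.mp ht
    exact ⟨K, r, hr, hl.mono hsub⟩
  choose K r hr hlip using h
  obtain ⟨T, hTs, hcover⟩ := hs.elim_nhds_subcover (fun x => Metric.ball x (r x))
    (fun x _ => Metric.ball_mem_nhds x (hr x))
  have hsub : P '' s ⊆ ⋃ x ∈ T, P '' Metric.closedBall x (r x) := by
    intro w hw
    obtain ⟨y, hy, rfl⟩ := hw
    obtain ⟨x, hx, hyx⟩ := Set.mem_iUnion₂.mp (hcover hy)
    exact Set.mem_iUnion₂.mpr ⟨x, hx, Set.mem_image_of_mem _ (Metric.ball_subset_closedBall hyx)⟩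
  refine lt_of_le_of_lt ((measure_mono hsub).trans (measure_biUnion_finset_le _ _)) ?_
  refine ENNReal.sum_lt_top.mpr fun x _ => ?_
  refine lt_of_le_of_lt ((hlip x).hausdorffMeasure_image_le (by norm_num)) ?_
  have h2 : (μH[(2:ℝ)] : Measure (Fin 2 → ℝ)) = volume := by
    have := MeasureTheory.hausdorffMeasure_pi_real (ι := Fin 2)
    simpa using this
  rw [h2]
  exact ENNReal.mul_lt_top
    (by simp [ENNReal.rpow_lt_top_of_nonneg]) (measure_closedBall_lt_top)

private lemma sphere_subset_param :
    sphere (0 : EuclideanSpace ℝ (Fin 3)) 1 ⊆ sphParam '' Metric.closedBall 0 4 := by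
  intro y hy
  have hn : ‖y‖ = 1 := by simpa using hy
  have hsum : (y 0) ^ 2 + (y 1) ^ 2 + (y 2) ^ 2 = 1 := by
    have := EuclideanSpace.norm_eq y
    rw [hn] at this
    have h1 : Real.sqrt (∑ i : Fin 3, ‖y i‖ ^ 2) = 1 := this.symm
    have h2 : (∑ i : Fin 3, ‖y i‖ ^ 2) = 1 := by
      have hnn : (0:ℝ) ≤ ∑ i : Fin 3, ‖y i‖ ^ 2 :=
        Finset.sum_nonneg fun i _ => sq_nonneg _
      nlinarith [Real.sq_sqrt hnn]
    simpa [Fin.sum_univ_three, Real.norm_eq_abs, sq_abs] using h2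
  set c := y 2 with hc
  have hc1 : -1 ≤ c := by nlinarith
  have hc2 : c ≤ 1 := by nlinarith
  set θ := Real.arccos c with hθ
  have hcos : Real.cos θ = c := Real.cos_arccos hc1 hc2
  have hsin : Real.sin θ = Real.sqrt (1 - c ^ 2) := Real.sin_arccos c
  set z : ℂ := ⟨y 0, y 1⟩ with hz
  have habs : ‖z‖ = Real.sin θ := by
    rw [hsin, Complex.norm_def, Complex.normSq_mk]
    congr 1
    nlinarith
  set φ := Complex.arg z with hφ
  refine ⟨![θ, φ], ?_, ?_⟩
  · rw [Metric.mem_closedBall]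
    rw [dist_pi_le_iff (by norm_num)]
    intro i
    fin_cases i <;> simp [Real.dist_eq]
    · rw [abs_of_nonneg (Real.arccos_nonneg c)]
      linarith [Real.arccos_le_pi c, Real.pi_le_four]
    · exact (Complex.abs_arg_le_pi z).trans Real.pi_le_four
  · unfold sphParam
    apply ((EuclideanSpace.equiv (Fin 3) ℝ).symm_apply_eq).mpr
    funext i
    have key0 : Real.sin θ * Real.cos φ = y 0 ∧ Real.sin θ * Real.sin φ = y 1 := by
      by_cases habs0 : ‖z‖ = 0
      · have hz0 : z = 0 := by simpa using habs0
        have hy0 : y 0 = 0 := by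
          have := congrArg Complex.re hz0; simpa [hz] using this
        have hy1 : y 1 = 0 := by
          have := congrArg Complex.im hz0; simpa [hz] using this
        have hs0 : Real.sin θ = 0 := by rw [← habs, habs0]
        constructor <;> simp [hs0, hy0, hy1]
      · have hzne : z ≠ 0 := by simpa using habs0
        have hcφ : Real.cos φ = y 0 / ‖z‖ := by
          simpa [hz] using Complex.cos_arg hzne
        have hsφ : Real.sin φ = y 1 / ‖z‖ := by
          simpa [hz] using Complex.sin_arg z
        constructor
        · rw [hcφ, ← habs]; field_simp
        · rw [hsφ, ← habs]; field_simp
    fin_cases i <;> simp [EuclideanSpace.equiv, key0.1, key0.2, hcos, hc]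

private lemma sphere_hausdorff_lt_top :
    μH[(2:ℝ)] (sphere (0 : EuclideanSpace ℝ (Fin 3)) 1) < ⊤ :=
  lt_of_le_of_lt (measure_mono sphere_subset_param)
    (image_compact_hausdorff_lt_top _ sphParam_contDiff _ (isCompact_closedBall _ _))

private lemma hausdorff_image_homothety (x : EuclideanSpace ℝ (Fin 3)) {r : ℝ} (hr : 0 < r)
    (s : Set (EuclideanSpace ℝ (Fin 3))) :
    μH[(2:ℝ)] ((fun y => x + r • y) '' s) = ENNReal.ofReal (r^2) * μH[(2:ℝ)] s := by
  have h1 : (fun y : EuclideanSpace ℝ (Fin 3) => x + r • y) '' s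
      = (IsometryEquiv.addLeft x) '' (r • s) := by
    rw [← Set.image_smul, ← Set.image_comp]; rfl
  rw [h1, IsometryEquiv.hausdorffMeasure_image,
    MeasureTheory.Measure.hausdorffMeasure_smul₀ (by norm_num : (0:ℝ) ≤ 2) (ne_of_gt hr) s]
  rw [ENNReal.smul_def, smul_eq_mul]
  congr 1
  have hnn : ‖r‖₊ ^ (2:ℝ) = Real.toNNReal (r ^ 2) := by
    ext
    rw [NNReal.coe_rpow, coe_nnnorm, Real.norm_eq_abs, abs_of_pos hr,
      Real.coe_toNNReal _ (by positivity),
      show (2:ℝ) = ((2:ℕ):ℝ) by norm_num, Real.rpow_natCast]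
  rw [hnn]
  rfl

private lemma sphere_restrict_eq_map (x : EuclideanSpace ℝ (Fin 3)) {r : ℝ} (hr : 0 < r) :
    (μH[(2:ℝ)] : Measure (EuclideanSpace ℝ (Fin 3))).restrict (sphere x r)
      = Measure.map (fun y => x + r • y)
        (ENNReal.ofReal (r^2) • (μH[(2:ℝ)] : Measure (EuclideanSpace ℝ (Fin 3))).restrict
          (sphere (0 : EuclideanSpace ℝ (Fin 3)) 1)) := by
  set φ : EuclideanSpace ℝ (Fin 3) → EuclideanSpace ℝ (Fin 3) := fun y => x + r • y with hφ
  have hφm : Measurable φ := (measurable_id.const_smul r).const_add x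
  have hφinj : Function.Injective φ := by
    intro a b hab
    have : r • a = r • b := by simpa [hφ] using hab
    exact smul_right_injective _ (ne_of_gt hr) this
  have hsph : φ '' sphere (0 : EuclideanSpace ℝ (Fin 3)) 1 = sphere x r := by
    ext w
    constructor
    · rintro ⟨y, hy, rfl⟩
      have hy1 : ‖y‖ = 1 := by simpa using hy
      have : dist (φ y) x = r := by
        simp [hφ, dist_eq_norm, norm_smul, hy1, abs_of_pos hr]
      simpa [mem_sphere, dist_eq_norm] using this
    · intro hw
      have hw1 : ‖w - x‖ = r := by
        simpa [mem_sphere, dist_eq_norm] using hw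
      refine ⟨r⁻¹ • (w - x), ?_, ?_⟩
      · have : ‖r⁻¹ • (w - x)‖ = 1 := by
          rw [norm_smul, hw1]
          simp [abs_of_pos (inv_pos.mpr hr), abs_of_pos hr, inv_mul_cancel₀ (ne_of_gt hr)]
        simpa [mem_sphere, dist_eq_norm] using this
      · simp [hφ, smul_smul, mul_inv_cancel₀ (ne_of_gt hr)]
  ext A hA
  rw [Measure.map_apply hφm hA, Measure.smul_apply, Measure.restrict_apply hA,
    Measure.restrict_apply (hφm hA), smul_eq_mul]
  have himg : A ∩ sphere x r = φ '' (φ ⁻¹' A ∩ sphere (0 : EuclideanSpace ℝ (Fin 3)) 1) := by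
    ext w
    constructor
    · rintro ⟨hwA, hws⟩
      obtain ⟨y, hyS, rfl⟩ := hsph ▸ hws
      exact ⟨y, ⟨hwA, hyS⟩, rfl⟩
    · rintro ⟨y, ⟨hyA, hyS⟩, rfl⟩
      exact ⟨hyA, hsph ▸ Set.mem_image_of_mem _ hyS⟩
  rw [himg, hausdorff_image_homothety x hr]


private lemma sphericalMean_eq (h : EuclideanSpace ℝ (Fin 3) → ℝ) (hh : Continuous h)
    (x : EuclideanSpace ℝ (Fin 3)) {r : ℝ} (hr : 0 < r) :
    sphericalMean h r x = (1 / (4 * π)) *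
      ∫ y in sphere (0 : EuclideanSpace ℝ (Fin 3)) 1, h (x + r • y) ∂(μH[2]) := by
  have hint : ∫ y in sphere x r, h y ∂(μH[2])
      = (r^2) * ∫ y in sphere (0 : EuclideanSpace ℝ (Fin 3)) 1, h (x + r • y) ∂(μH[2]) := by
    rw [sphere_restrict_eq_map x hr,
      integral_map (φ := fun y => x + r • y) (by fun_prop) hh.aestronglyMeasurable, integral_smul_measure, ENNReal.toReal_ofReal (by positivity)]
    rfl
  rw [sphericalMean, if_neg (ne_of_gt hr), hint]
  have hπ := Real.pi_ne_zero
  field_simp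

/-- For fixed `τ > 0`, the Kirchhoff spherical-means solution
`A(τ,x;τ₀) = ∂_τ((τ−τ₀)·M_f(τ−τ₀,x)) + (τ−τ₀)·M_g(τ−τ₀,x)` depends continuously on the
initial time `τ₀` down to the singular time `τ₀ = 0`: as `τ₀ → 0⁺` it converges to
`∂_τ(τ·M_f(τ,x)) + τ·M_g(τ,x)`. -/
theorem kirchhoff_tendsto_singular_initial_time
    (f g : EuclideanSpace ℝ (Fin 3) → ℝ)
    (hf : ContDiff ℝ 2 f) (hg : ContDiff ℝ 1 g)
    (hfsupp : HasCompactSupport f) (hgsupp : HasCompactSupport g)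
    (x : EuclideanSpace ℝ (Fin 3)) (τ : ℝ) (hτ : 0 < τ) :
    Tendsto (fun τ₀ : ℝ =>
        deriv (fun s => (s - τ₀) * sphericalMean f (s - τ₀) x) τ
          + (τ - τ₀) * sphericalMean g (τ - τ₀) x)
      (𝓝[>] 0)
      (𝓝 (deriv (fun s => s * sphericalMean f s x) τ + τ * sphericalMean g τ x)) := by
  classical
  haveI : IsFiniteMeasure
      ((μH[(2:ℝ)] : Measure (EuclideanSpace ℝ (Fin 3))).restrict
        (sphere (0 : EuclideanSpace ℝ (Fin 3)) 1)) :=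
    ⟨by rw [Measure.restrict_apply_univ]; exact sphere_hausdorff_lt_top⟩
  obtain ⟨Cg, hCg⟩ := hgsupp.exists_bound_of_continuous hg.continuous
  have hfd : Continuous (fderiv ℝ f) := hf.continuous_fderiv two_ne_zero
  obtain ⟨Cf', hCf'⟩ := (hfsupp.fderiv (𝕜 := ℝ)).exists_bound_of_continuous hfd
  have hymem : ∀ᵐ y ∂((μH[(2:ℝ)] : Measure (EuclideanSpace ℝ (Fin 3))).restrict
      (sphere (0 : EuclideanSpace ℝ (Fin 3)) 1)), ‖y‖ = 1 := by
    filter_upwards [ae_restrict_mem isClosed_sphere.measurableSet] with y hy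
    simpa using hy
  set ν := (μH[(2:ℝ)] : Measure (EuclideanSpace ℝ (Fin 3))).restrict
      (sphere (0 : EuclideanSpace ℝ (Fin 3)) 1) with hν
  set Jf : ℝ → ℝ := fun r => ∫ y, f (x + r • y) ∂ν with hJfdef
  set Jg : ℝ → ℝ := fun r => ∫ y, g (x + r • y) ∂ν with hJgdef
  set Kf : ℝ → ℝ := fun r => ∫ y, (fderiv ℝ f (x + r • y)) y ∂ν with hKfdef
  have hJg_cont : Continuous Jg := by
    apply continuous_of_dominated (bound := fun _ => Cg)
    · intro r; exact (hg.continuous.comp (by fun_prop)).aestronglyMeasurable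
    · intro r; exact Eventually.of_forall fun y => hCg _
    · exact integrable_const Cg
    · exact Eventually.of_forall fun y =>
        hg.continuous.comp (by fun_prop : Continuous fun r : ℝ => x + r • y)
  have hKf_cont : Continuous Kf := by
    apply continuous_of_dominated (bound := fun _ => Cf')
    · intro r
      exact ((hfd.comp (by fun_prop)).clm_apply continuous_id).aestronglyMeasurable
    · intro r
      filter_upwards [hymem] with y hy
      calc ‖(fderiv ℝ f (x + r • y)) y‖ ≤ ‖fderiv ℝ f (x + r • y)‖ * ‖y‖ :=
            (fderiv ℝ f (x + r • y)).le_opNorm y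
        _ ≤ Cf' := by rw [hy, mul_one]; exact hCf' _
    · exact integrable_const Cf'
    · filter_upwards with y
      exact (hfd.comp (by fun_prop : Continuous fun r : ℝ => x + r • y)).clm_apply
        continuous_const
  have hcomp : ∀ (y : EuclideanSpace ℝ (Fin 3)) (r : ℝ),
      HasDerivAt (fun r : ℝ => x + r • y) y r := fun y r => by
    simpa using ((hasDerivAt_id r).smul_const y).const_add x
  have hJf_deriv : ∀ r : ℝ, HasDerivAt Jf (Kf r) r := by
    intro r
    refine (hasDerivAt_integral_of_dominated_loc_of_deriv_le (μ := ν)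
      (F := fun r y => f (x + r • y))
      (F' := fun r y => (fderiv ℝ f (x + r • y)) y) (bound := fun _ => Cf')
      (Metric.ball_mem_nhds r zero_lt_one) ?_ ?_ ?_ ?_ ?_ ?_).2
    · exact Eventually.of_forall fun r =>
        (hf.continuous.comp (by fun_prop)).aestronglyMeasurable
    · obtain ⟨Cf, hCf⟩ := hfsupp.exists_bound_of_continuous hf.continuous
      exact (integrable_const Cf).mono'
        (hf.continuous.comp (by fun_prop)).aestronglyMeasurable
        (Eventually.of_forall fun y => hCf _)
    · exact ((hfd.comp (by fun_prop)).clm_apply continuous_id).aestronglyMeasurable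
    · filter_upwards [hymem] with y hy r _
      calc ‖(fderiv ℝ f (x + r • y)) y‖ ≤ ‖fderiv ℝ f (x + r • y)‖ * ‖y‖ :=
            (fderiv ℝ f (x + r • y)).le_opNorm y
        _ ≤ Cf' := by rw [hy, mul_one]; exact hCf' _
    · exact integrable_const Cf'
    · filter_upwards with y r _
      exact ((hf.differentiable two_ne_zero) _).hasFDerivAt.comp_hasDerivAt r (hcomp y r)
  have hJf_cont : Continuous Jf := by
    have : Differentiable ℝ Jf := fun r => (hJf_deriv r).differentiableAt
    exact this.continuous
  have hderivF : ∀ r : ℝ, 0 < r → deriv (fun s => s * sphericalMean f s x) r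
      = 1 * ((1/(4*π)) * Jf r) + r * ((1/(4*π)) * Kf r) := by
    intro r hr
    have heq : (fun s => s * sphericalMean f s x) =ᶠ[𝓝 r]
        fun s => s * ((1/(4*π)) * Jf s) := by
      filter_upwards [isOpen_Ioi.mem_nhds hr] with s hs
      rw [sphericalMean_eq f hf.continuous x hs]
    rw [heq.deriv_eq]
    exact ((hasDerivAt_id r).mul ((hJf_deriv r).const_mul (1/(4*π)))).deriv
  have hGcont : ContinuousAt
      (fun r => deriv (fun s => s * sphericalMean f s x) r + r * sphericalMean g r x) τ := by
    have hG0 : Continuous fun r =>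
        (1 * ((1/(4*π)) * Jf r) + r * ((1/(4*π)) * Kf r)) + r * ((1/(4*π)) * Jg r) :=
      ((continuous_const.mul (continuous_const.mul hJf_cont)).add
        (continuous_id.mul (continuous_const.mul hKf_cont))).add
        (continuous_id.mul (continuous_const.mul hJg_cont))
    apply hG0.continuousAt.congr
    filter_upwards [isOpen_Ioi.mem_nhds hτ] with r hr
    rw [hderivF r hr, sphericalMean_eq g hg.continuous x hr]
  have htend : Tendsto (fun τ₀ : ℝ => τ - τ₀) (𝓝[>] 0) (𝓝 τ) := by
    have : Tendsto (fun τ₀ : ℝ => τ - τ₀) (𝓝 0) (𝓝 (τ - 0)) :=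
      tendsto_const_nhds.sub tendsto_id
    simpa using this.mono_left nhdsWithin_le_nhds
  have hmain : Tendsto (fun τ₀ : ℝ =>
      deriv (fun s => s * sphericalMean f s x) (τ - τ₀)
        + (τ - τ₀) * sphericalMean g (τ - τ₀) x) (𝓝[>] 0)
      (𝓝 (deriv (fun s => s * sphericalMean f s x) τ + τ * sphericalMean g τ x)) := by
    exact hGcont.tendsto.comp htend
  refine hmain.congr' ?_
  filter_upwards [Ioo_mem_nhdsGT_of_mem (Set.mem_Ico.mpr ⟨le_refl 0, hτ⟩)] with τ₀ hτ₀
  congr 1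
  exact (deriv_comp_sub_const (fun u => u * sphericalMean f u x) τ₀ τ).symm
end
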